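/- Data processing inequality for χ²-divergence matrices: if K is a Markov kernel and Q_0,…,Q_M are probability measures with Q_j ≪ Q_0 for all j, then χ²(KQ_0,…,KQ_M) ≤ χ²(Q_0,…,Q_M) in the partial order of positive semi-definite matrices, i.e., vᵀ χ²(KQ_0,…,KQ_M) v ≤ vᵀ χ²(Q_0,…,Q_M) v for all v ∈ ℝ^M. -/

import Mathlib

open MeasureTheory ProbabilityTheory Matrix

section Helpers

variable {α β : Type*} [MeasurableSpace α] [MeasurableSpace β]

lemma bind_eq_snd_compProd (μ : Measure α) [SFinite μ] (κ : Kernel α β) [IsSFiniteKernel κ] :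
    μ.bind ⇑κ = (μ ⊗ₘ κ).snd := by
  ext s hs
  rw [Measure.bind_apply hs κ.measurable.aemeasurable, Measure.snd_apply hs,
    Measure.compProd_apply (measurable_snd hs)]
  rfl

variable {f : β → ℝ} {μ : Measure α} {κ : Kernel α β}

lemma aux2 [SFinite μ] [IsSFiniteKernel κ] (hm : StronglyMeasurable f)
    (hf : Integrable f (μ.bind ⇑κ)) :
    (∀ᵐ x ∂μ, Integrable f (κ x)) ∧ Integrable (fun x => ∫ y, ‖f y‖ ∂κ x) μ ∧
      ∫ y, f y ∂(μ.bind ⇑κ) = ∫ x, ∫ y, f y ∂κ x ∂μ := by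
  have hsnd : Integrable (fun p : α × β => f p.2) (μ ⊗ₘ κ) := by
    rw [bind_eq_snd_compProd] at hf
    exact (integrable_map_measure hf.aestronglyMeasurable measurable_snd.aemeasurable).mp hf
  have h := (Measure.integrable_compProd_iff hsnd.aestronglyMeasurable).mp hsnd
  refine ⟨h.1, h.2, ?_⟩
  rw [bind_eq_snd_compProd, Measure.snd,
    integral_map measurable_snd.aemeasurable hm.aestronglyMeasurable,
    Measure.integral_compProd hsnd]

lemma kint_sm [IsSFiniteKernel κ] (hm : StronglyMeasurable f) :
    StronglyMeasurable (fun x => ∫ y, f y ∂κ x) :=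
  (hm.comp_measurable (measurable_snd : Measurable (Prod.snd : α × β → β))).integral_kernel_prod_right'

lemma kint_integrable [SFinite μ] [IsSFiniteKernel κ] (hm : StronglyMeasurable f)
    (hf : Integrable f (μ.bind ⇑κ)) : Integrable (fun x => ∫ y, f y ∂κ x) μ := by
  obtain ⟨-, h2, -⟩ := aux2 hm hf
  refine h2.mono (kint_sm hm).aestronglyMeasurable (Filter.Eventually.of_forall fun x => ?_)
  simpa using (norm_integral_le_integral_norm (μ := κ x) f).trans (le_abs_self _)

lemma jensen_sq (m : Measure β) [IsProbabilityMeasure m] {G : β → ℝ}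
    (hG : Integrable G m) (hG2 : Integrable (fun y => G y ^ 2) m) :
    (∫ y, G y ∂m) ^ 2 ≤ ∫ y, G y ^ 2 ∂m := by
  set c := ∫ y, G y ∂m with hc
  have h0 : 0 ≤ ∫ y, (G y - c) ^ 2 ∂m := integral_nonneg fun y => sq_nonneg _
  have hI : Integrable (fun y => G y ^ 2 - 2 * c * G y) m := hG2.sub (hG.const_mul _)
  have e : ∫ y, (G y - c) ^ 2 ∂m = ∫ y, G y ^ 2 ∂m - c ^ 2 := by
    calc ∫ y, (G y - c) ^ 2 ∂m = ∫ y, ((G y ^ 2 - 2 * c * G y) + c ^ 2) ∂m := by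
          congr 1; ext y; ring
      _ = (∫ y, (G y ^ 2 - 2 * c * G y) ∂m) + c ^ 2 := by
          rw [integral_add hI (integrable_const _)]; simp
      _ = ∫ y, G y ^ 2 ∂m - 2 * c * ∫ y, G y ∂m + c ^ 2 := by
          rw [integral_sub hG2 (hG.const_mul _), integral_const_mul]
      _ = ∫ y, G y ^ 2 ∂m - c ^ 2 := by rw [← hc]; ring
  linarith [e ▸ h0]

lemma bind_ac [SFinite μ] {ν : Measure α} [SFinite ν] [IsSFiniteKernel κ] (h : μ ≪ ν) :
    μ.bind ⇑κ ≪ ν.bind ⇑κ := by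
  refine Measure.AbsolutelyContinuous.mk fun s hs hs0 => ?_
  rw [Measure.bind_apply hs κ.measurable.aemeasurable] at hs0 ⊢
  have h1 : (fun x => κ x s) =ᵐ[ν] 0 :=
    (lintegral_eq_zero_iff (κ.measurable_coe hs)).mp hs0
  rw [lintegral_eq_zero_iff (κ.measurable_coe hs)]
  exact h.ae_le h1

instance bind_prob (μ : Measure α) [IsProbabilityMeasure μ] (κ : Kernel α β) [IsMarkovKernel κ] :
    IsProbabilityMeasure (μ.bind ⇑κ) := by
  constructor
  rw [Measure.bind_apply MeasurableSet.univ κ.measurable.aemeasurable]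
  simp

open Matrix in
lemma quad_form_eq {M : ℕ} (μ₀ : Measure α) (μ : Fin M → Measure α)
    [IsProbabilityMeasure μ₀] [∀ j, IsProbabilityMeasure (μ j)]
    (hAC : ∀ j, μ j ≪ μ₀)
    (hInt : ∀ j k, Integrable (fun ω => ((μ j).rnDeriv μ₀ ω).toReal) (μ k)) (v : Fin M → ℝ) :
    v ⬝ᵥ ((Matrix.of fun j k : Fin M =>
        (∫ ω, ((μ j).rnDeriv μ₀ ω).toReal ∂(μ k)) - 1) *ᵥ v) =
      ∫ ω, (∑ j, v j * ((μ j).rnDeriv μ₀ ω).toReal) ^ 2 ∂μ₀ - (∑ j, v j) ^ 2 := by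
  classical
  set f : Fin M → α → ℝ := fun j ω => ((μ j).rnDeriv μ₀ ω).toReal with hfdef
  have hmul : ∀ j k, Integrable (fun ω => f k ω * f j ω) μ₀ := by
    intro j k
    have := (integrable_rnDeriv_smul_iff (E := ℝ) (f := f j) (hAC k)).mpr (hInt j k)
    simpa [smul_eq_mul] using this
  have hterm : ∀ j k, ∫ ω, f j ω ∂(μ k) = ∫ ω, f k ω * f j ω ∂μ₀ := by
    intro j k
    have := integral_rnDeriv_smul (E := ℝ) (f := f j) (hAC k)
    simpa [smul_eq_mul] using this.symm
  have hint_term : ∀ j k : Fin M, Integrable (fun ω => v j * f j ω * (v k * f k ω)) μ₀ := by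
    intro j k
    exact ((hmul j k).const_mul (v j * v k)).congr
      (Filter.Eventually.of_forall fun ω => by ring)
  have hgsq : ∫ ω, (∑ j, v j * f j ω) ^ 2 ∂μ₀
      = ∑ j, ∑ k, v j * v k * ∫ ω, f k ω * f j ω ∂μ₀ := by
    calc ∫ ω, (∑ j, v j * f j ω) ^ 2 ∂μ₀
        = ∫ ω, ∑ j, ∑ k, v j * f j ω * (v k * f k ω) ∂μ₀ := by
          congr 1; ext ω
          rw [sq, Finset.sum_mul_sum]
      _ = ∑ j, ∑ k, ∫ ω, v j * f j ω * (v k * f k ω) ∂μ₀ := by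
          rw [integral_finset_sum _ fun j _ =>
            integrable_finset_sum _ fun k _ => hint_term j k]
          exact Finset.sum_congr rfl fun j _ =>
            integral_finset_sum _ fun k _ => hint_term j k
      _ = ∑ j, ∑ k, v j * v k * ∫ ω, f k ω * f j ω ∂μ₀ := by
          refine Finset.sum_congr rfl fun j _ => Finset.sum_congr rfl fun k _ => ?_
          rw [← integral_const_mul]
          congr 1; ext ω; ring
  have hvsq : (∑ j, v j) ^ 2 = ∑ j : Fin M, ∑ k : Fin M, v j * v k := by
    rw [sq, Finset.sum_mul_sum]
  rw [hgsq, hvsq]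
  simp only [dotProduct, mulVec, Matrix.of_apply, Finset.mul_sum, ← Finset.sum_sub_distrib]
  refine Finset.sum_congr rfl fun j _ => Finset.sum_congr rfl fun k _ => ?_
  rw [hterm j k]
  ring

lemma core_ineq {M : ℕ} (Q₀ : Measure α) (Qs : Fin M → Measure α)
    [IsProbabilityMeasure Q₀] [∀ j, IsProbabilityMeasure (Qs j)]
    (hAC : ∀ j, Qs j ≪ Q₀) (κ : Kernel α β) [IsMarkovKernel κ]
    (hIntQ : ∀ j k, Integrable (fun ω => ((Qs j).rnDeriv Q₀ ω).toReal) (Qs k))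
    (hIntKQ : ∀ j k, Integrable
      (fun ω => (((Qs j).bind ⇑κ).rnDeriv (Q₀.bind ⇑κ) ω).toReal) ((Qs k).bind ⇑κ))
    (v : Fin M → ℝ) :
    ∫ ω, (∑ j, v j * (((Qs j).bind ⇑κ).rnDeriv (Q₀.bind ⇑κ) ω).toReal) ^ 2 ∂(Q₀.bind ⇑κ) ≤
      ∫ ω, (∑ j, v j * ((Qs j).rnDeriv Q₀ ω).toReal) ^ 2 ∂Q₀ := by
  classical
  set P₀ : Measure β := Q₀.bind ⇑κ with hP₀
  set Ps : Fin M → Measure β := fun j => (Qs j).bind ⇑κ with hPs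
  have hprob0 : IsProbabilityMeasure P₀ := bind_prob Q₀ κ
  have hprobs : ∀ j, IsProbabilityMeasure (Ps j) := fun j => bind_prob (Qs j) κ
  have hACP : ∀ j, Ps j ≪ P₀ := fun j => bind_ac (hAC j)
  set f : Fin M → α → ℝ := fun j ω => ((Qs j).rnDeriv Q₀ ω).toReal with hfdef
  set F : Fin M → β → ℝ := fun j ω => ((Ps j).rnDeriv P₀ ω).toReal with hFdef
  set g : α → ℝ := fun ω => ∑ j, v j * f j ω with hgdef
  set G : β → ℝ := fun ω => ∑ j, v j * F j ω with hGdef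
  have hFm : ∀ j, Measurable (F j) := fun j => (Measure.measurable_rnDeriv _ _).ennreal_toReal
  have hGm : Measurable G := Finset.measurable_sum _ fun j _ => (hFm j).const_mul _
  have hGsm : StronglyMeasurable G := hGm.stronglyMeasurable
  have hG2sm : StronglyMeasurable (fun ω => G ω ^ 2) := (hGm.pow_const 2).stronglyMeasurable
  -- Integrabilities on the image side
  have hGk : ∀ k, Integrable G (Ps k) := fun k =>
    integrable_finset_sum _ fun j _ => ((hIntKQ j k).const_mul _)
  have hG0 : Integrable G P₀ := integrable_finset_sum _ fun j _ =>
    (Measure.integrable_toReal_rnDeriv).const_mul _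
  have hFF : ∀ j k, Integrable (fun ω => F k ω * F j ω) P₀ := by
    intro j k
    have := (integrable_rnDeriv_smul_iff (E := ℝ) (f := F j) (hACP k)).mpr (hIntKQ j k)
    simpa [smul_eq_mul] using this
  have hFG : ∀ k, Integrable (fun ω => F k ω * G ω) P₀ := by
    intro k
    have := (integrable_rnDeriv_smul_iff (E := ℝ) (f := G) (hACP k)).mpr (hGk k)
    simpa [smul_eq_mul] using this
  have hG2 : Integrable (fun ω => G ω ^ 2) P₀ := by
    have : (fun ω => G ω ^ 2) = fun ω => ∑ k, v k * (F k ω * G ω) := by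
      ext ω
      rw [sq, hGdef]
      rw [Finset.sum_mul]
      exact Finset.sum_congr rfl fun k _ => by ring
    rw [this]
    exact integrable_finset_sum _ fun k _ => (hFG k).const_mul _
  -- Step 1 : ∫ G² ∂P₀ = ∑ k, v k * ∫ G ∂(Ps k)
  have step1 : ∫ ω, G ω ^ 2 ∂P₀ = ∑ k, v k * ∫ ω, G ω ∂(Ps k) := by
    have he : (fun ω => G ω ^ 2) = fun ω => ∑ k, v k * (F k ω * G ω) := by
      ext ω
      rw [sq, hGdef, Finset.sum_mul]
      exact Finset.sum_congr rfl fun k _ => by ring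
    rw [he, integral_finset_sum _ fun k _ => (hFG k).const_mul _]
    refine Finset.sum_congr rfl fun k _ => ?_
    rw [integral_const_mul]
    congr 1
    have := integral_rnDeriv_smul (E := ℝ) (f := G) (hACP k)
    simpa [smul_eq_mul] using this
  -- Step 2 : disintegrate
  set T : α → ℝ := fun x => ∫ y, G y ∂κ x with hTdef
  have hTsm : StronglyMeasurable T := kint_sm hGsm
  have step2 : ∀ k, ∫ ω, G ω ∂(Ps k) = ∫ x, T x ∂(Qs k) := fun k => (aux2 hGsm (hGk k)).2.2
  have hTk : ∀ k, Integrable T (Qs k) := fun k => kint_integrable hGsm (hGk k)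
  have hfT : ∀ k, Integrable (fun x => f k x * T x) Q₀ := by
    intro k
    have := (integrable_rnDeriv_smul_iff (E := ℝ) (f := T) (hAC k)).mpr (hTk k)
    simpa [smul_eq_mul] using this
  have step3 : ∀ k, ∫ x, T x ∂(Qs k) = ∫ x, f k x * T x ∂Q₀ := by
    intro k
    have := integral_rnDeriv_smul (E := ℝ) (f := T) (hAC k)
    simpa [smul_eq_mul] using this.symm
  have hgT_int : Integrable (fun x => g x * T x) Q₀ := by
    have he : (fun x => g x * T x) = fun x => ∑ k, v k * (f k x * T x) := by
      ext x
      rw [hgdef, Finset.sum_mul]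
      exact Finset.sum_congr rfl fun k _ => by ring
    rw [he]
    exact integrable_finset_sum _ fun k _ => (hfT k).const_mul _
  have stepA : ∫ ω, G ω ^ 2 ∂P₀ = ∫ x, g x * T x ∂Q₀ := by
    rw [step1]
    have he : (fun x => g x * T x) = fun x => ∑ k, v k * (f k x * T x) := by
      ext x
      rw [hgdef, Finset.sum_mul]
      exact Finset.sum_congr rfl fun k _ => by ring
    rw [he, integral_finset_sum _ fun k _ => (hfT k).const_mul _]
    refine Finset.sum_congr rfl fun k _ => ?_
    rw [step2 k, step3 k, integral_const_mul]
  -- Jensen step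
  have hae1 : ∀ᵐ x ∂Q₀, Integrable G (κ x) := (aux2 hGsm hG0).1
  have hae2 : ∀ᵐ x ∂Q₀, Integrable (fun y => G y ^ 2) (κ x) := (aux2 hG2sm hG2).1
  have hS : Integrable (fun x => ∫ y, G y ^ 2 ∂κ x) Q₀ := kint_integrable hG2sm hG2
  have hjensen : ∀ᵐ x ∂Q₀, T x ^ 2 ≤ ∫ y, G y ^ 2 ∂κ x := by
    filter_upwards [hae1, hae2] with x h1 h2
    exact jensen_sq (κ x) h1 h2
  have hT2sm : StronglyMeasurable fun x => T x ^ 2 := by simp only [sq]; exact hTsm.mul hTsm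
  have hT2 : Integrable (fun x => T x ^ 2) Q₀ := by
    refine hS.mono hT2sm.aestronglyMeasurable ?_
    filter_upwards [hjensen] with x hx
    rw [Real.norm_eq_abs, abs_of_nonneg (sq_nonneg _)]
    exact hx.trans (le_abs_self _)
  have hCA : ∫ x, T x ^ 2 ∂Q₀ ≤ ∫ ω, G ω ^ 2 ∂P₀ := by
    have h1 : ∫ x, T x ^ 2 ∂Q₀ ≤ ∫ x, ∫ y, G y ^ 2 ∂κ x ∂Q₀ :=
      integral_mono_ae hT2 hS hjensen
    have h2 : ∫ ω, G ω ^ 2 ∂P₀ = ∫ x, ∫ y, G y ^ 2 ∂κ x ∂Q₀ := (aux2 hG2sm hG2).2.2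
    linarith
  -- g² integrable
  have hff : ∀ j k, Integrable (fun ω => f k ω * f j ω) Q₀ := by
    intro j k
    have := (integrable_rnDeriv_smul_iff (E := ℝ) (f := f j) (hAC k)).mpr (hIntQ j k)
    simpa [smul_eq_mul] using this
  have hg2 : Integrable (fun x => g x ^ 2) Q₀ := by
    have he : (fun x => g x ^ 2) = fun x => ∑ j, ∑ k, v j * v k * (f k x * f j x) := by
      ext x
      rw [sq, hgdef, Finset.sum_mul_sum]
      exact Finset.sum_congr rfl fun j _ => Finset.sum_congr rfl fun k _ => by ring
    rw [he]
    exact integrable_finset_sum _ fun j _ =>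
      integrable_finset_sum _ fun k _ => ((hff j k).const_mul _)
  -- combine
  have hmid : ∀ x, g x * T x ≤ (g x ^ 2 + T x ^ 2) / 2 := fun x => by
    nlinarith [sq_nonneg (g x - T x)]
  have hmain : ∫ x, g x * T x ∂Q₀ ≤ (∫ x, g x ^ 2 ∂Q₀ + ∫ x, T x ^ 2 ∂Q₀) / 2 := by
    calc ∫ x, g x * T x ∂Q₀ ≤ ∫ x, (g x ^ 2 + T x ^ 2) / 2 ∂Q₀ :=
          integral_mono hgT_int ((hg2.add hT2).div_const 2) hmid
      _ = (∫ x, g x ^ 2 ∂Q₀ + ∫ x, T x ^ 2 ∂Q₀) / 2 := by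
          rw [integral_div, integral_add hg2 hT2]
  linarith [stepA, hCA, hmain]


end Helpers

/-- Data processing inequality for chi-square divergence matrices: if `K` is a Markov kernel
and `Q_j ≪ Q_0` for all `j`, then `χ²(KQ_0,…,KQ_M) ≤ χ²(Q_0,…,Q_M)` in the positive
semi-definite order, i.e. `vᵀ χ²(KQ_0,…,KQ_M) v ≤ vᵀ χ²(Q_0,…,Q_M) v` for all `v`. -/
theorem stmt8 {Ω Ω' : Type*} [MeasurableSpace Ω] [MeasurableSpace Ω'] {M : ℕ}
    (Q : Fin (M + 1) → Measure Ω) [∀ j, IsProbabilityMeasure (Q j)]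
    (hAC : ∀ j : Fin M, Q j.succ ≪ Q 0)
    (κ : ProbabilityTheory.Kernel Ω Ω') [IsMarkovKernel κ]
    (hIntQ : ∀ j k : Fin M,
      Integrable (fun ω => ((Q j.succ).rnDeriv (Q 0) ω).toReal) (Q k.succ))
    (hIntKQ : ∀ j k : Fin M,
      Integrable (fun ω => (((Q j.succ).bind κ).rnDeriv ((Q 0).bind κ) ω).toReal)
        ((Q k.succ).bind κ)) :
    ∀ v : Fin M → ℝ,
      v ⬝ᵥ ((Matrix.of fun j k : Fin M =>
          (∫ ω, (((Q j.succ).bind κ).rnDeriv ((Q 0).bind κ) ω).toReal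
            ∂((Q k.succ).bind κ)) - 1) *ᵥ v) ≤
      v ⬝ᵥ ((Matrix.of fun j k : Fin M =>
          (∫ ω, ((Q j.succ).rnDeriv (Q 0) ω).toReal ∂(Q k.succ)) - 1) *ᵥ v) := by
  intro v
  have hACP : ∀ j : Fin M, (Q j.succ).bind ⇑κ ≪ (Q 0).bind ⇑κ := fun j => bind_ac (hAC j)
  have hL := quad_form_eq ((Q 0).bind ⇑κ) (fun j : Fin M => (Q j.succ).bind ⇑κ) hACP hIntKQ v
  have hR := quad_form_eq (Q 0) (fun j : Fin M => Q j.succ) hAC hIntQ v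
  have hcore := core_ineq (Q 0) (fun j : Fin M => Q j.succ) hAC κ hIntQ hIntKQ v
  rw [hL, hR]
  linarith
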